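/- For the real function g(x) = x(1+x²)(1+x^{2/α}) / (x^{1/α}·((1+x²)² − 4x²cos²(απ/2))) defined on (0,∞) with parameter α ∈ (0,1], the function attains its global minimum at x = 1, and that minimum value equals 1/sin²(απ/2). -/

import Mathlib

open Real



private lemma aux_mono {f f' : ℝ → ℝ} (hd : ∀ x, HasDerivAt f (f' x) x)
    (hf' : ∀ x, 0 ≤ x → 0 ≤ f' x) {t : ℝ} (ht : 0 ≤ t) : f 0 ≤ f t := by
  have hmono : MonotoneOn f (Set.Ici 0) := by
    apply monotoneOn_of_deriv_nonneg (convex_Ici 0)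
    · exact fun x _ => (hd x).continuousAt.continuousWithinAt
    · exact fun x _ => (hd x).differentiableAt.differentiableWithinAt
    · intro x hx
      rw [interior_Ici] at hx
      rw [(hd x).deriv]
      exact hf' x (le_of_lt hx)
  exact hmono Set.self_mem_Ici ht ht

private lemma sinh_superadd {l t : ℝ} (hl : 1 ≤ l) (ht : 0 ≤ t) :
    l * Real.sinh t ≤ Real.sinh (l * t) := by
  have hd : ∀ x : ℝ, HasDerivAt (fun y => Real.sinh (l * y) - l * Real.sinh y)
      (Real.cosh (l * x) * (l * 1) - l * Real.cosh x) x := by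
    intro x
    exact (((hasDerivAt_id x).const_mul l).sinh).sub ((Real.hasDerivAt_sinh x).const_mul l)
  have key : (fun y => Real.sinh (l * y) - l * Real.sinh y) 0 ≤
      (fun y => Real.sinh (l * y) - l * Real.sinh y) t := by
    apply aux_mono hd _ ht
    intro x hx
    have h1 : Real.cosh x ≤ Real.cosh (l * x) := by
      rw [Real.cosh_le_cosh]
      rw [abs_of_nonneg hx, abs_of_nonneg (by nlinarith : (0:ℝ) ≤ l * x)]
      nlinarith
    nlinarith [Real.cosh_pos x]
  simp only [mul_zero, Real.sinh_zero, sub_zero, sub_self] at key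
  linarith



private lemma cosh_lb (u : ℝ) : 1 + u^2/2 ≤ Real.cosh u := by
  rcases le_total 0 u with hu | hu
  · have h1 : u/2 ≤ Real.sinh (u/2) := Real.self_le_sinh_iff.2 (by linarith)
    have h2 : Real.cosh u = 1 + 2 * Real.sinh (u/2)^2 := by
      have := Real.cosh_two_mul (u/2)
      have h3 := Real.cosh_sq_sub_sinh_sq (u/2)
      rw [show 2*(u/2) = u by ring] at this
      nlinarith
    nlinarith
  · have h1 : Real.sinh (u/2) ≤ u/2 := by
      have := Real.self_le_sinh_iff (x := -(u/2)) |>.2 (by linarith)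
      have h4 := Real.sinh_neg (u/2)
      linarith
    have hsn : Real.sinh (u/2) ≤ 0 := Real.sinh_nonpos_iff.2 (by linarith)
    have h2 : Real.cosh u = 1 + 2 * Real.sinh (u/2)^2 := by
      have := Real.cosh_two_mul (u/2)
      have h3 := Real.cosh_sq_sub_sinh_sq (u/2)
      rw [show 2*(u/2) = u by ring] at this
      nlinarith
    nlinarith

private lemma cosh_sq_lb {m u : ℝ} (hm : 1 ≤ m) (hu : 0 ≤ u) :
    m^2 * (Real.cosh u - 1) ≤ Real.cosh (m * u) - 1 := by
  have hd : ∀ x : ℝ, HasDerivAt (fun y => Real.cosh (m * y) - m^2 * Real.cosh y)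
      (Real.sinh (m * x) * (m * 1) - m^2 * Real.sinh x) x := by
    intro x
    exact (((hasDerivAt_id x).const_mul m).cosh).sub ((Real.hasDerivAt_cosh x).const_mul (m^2))
  have key : (fun y => Real.cosh (m * y) - m^2 * Real.cosh y) 0 ≤
      (fun y => Real.cosh (m * y) - m^2 * Real.cosh y) u := by
    apply aux_mono hd _ hu
    intro x hx
    nlinarith [sinh_superadd hm hx]
  simp only [mul_zero, Real.cosh_zero] at key
  linarith

private lemma cosh_quartic_lb {m u : ℝ} (hm : 1 ≤ m) (hu : 0 ≤ u) :
    m^4 * (Real.cosh u - 1 - u^2/2) ≤ Real.cosh (m*u) - 1 - m^2*u^2/2 := by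
  have hdg : ∀ x : ℝ, HasDerivAt
      (fun y => m * Real.sinh (m*y) - m^2*y - m^4*Real.sinh y + m^4*y)
      (m * (Real.cosh (m*x) * (m*1)) - m^2 - m^4*Real.cosh x + m^4) x := by
    intro x
    have h1 : HasDerivAt (fun y => m * Real.sinh (m*y)) (m * (Real.cosh (m*x)*(m*1))) x :=
      (((hasDerivAt_id x).const_mul m).sinh).const_mul m
    have h2 : HasDerivAt (fun y : ℝ => m^2*y) (m^2) x := by
      simpa using (hasDerivAt_id x).const_mul (m^2)
    have h3 : HasDerivAt (fun y => m^4*Real.sinh y) (m^4*Real.cosh x) x :=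
      (Real.hasDerivAt_sinh x).const_mul (m^4)
    have h4 : HasDerivAt (fun y : ℝ => m^4*y) (m^4) x := by
      simpa using (hasDerivAt_id x).const_mul (m^4)
    exact ((h1.sub h2).sub h3).add h4
  have hgpos : ∀ x, 0 ≤ x → 0 ≤ m * Real.sinh (m*x) - m^2*x - m^4*Real.sinh x + m^4*x := by
    intro x hx
    have key := aux_mono hdg (fun y hy => by nlinarith [cosh_sq_lb hm hy]) hx
    simp only [mul_zero, Real.sinh_zero] at key
    linarith
  have hdf : ∀ x : ℝ, HasDerivAt
      (fun y => Real.cosh (m*y) - m^2/2*y^2 - m^4*Real.cosh y + m^4/2*y^2)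
      (m * Real.sinh (m*x) - m^2*x - m^4*Real.sinh x + m^4*x) x := by
    intro x
    have h1 : HasDerivAt (fun y => Real.cosh (m*y)) (Real.sinh (m*x) * (m*1)) x :=
      ((hasDerivAt_id x).const_mul m).cosh
    have h2 : HasDerivAt (fun y : ℝ => m^2/2*y^2) (m^2/2*(2*x^1)) x :=
      (hasDerivAt_pow 2 x).const_mul (m^2/2)
    have h3 : HasDerivAt (fun y => m^4*Real.cosh y) (m^4*Real.sinh x) x :=
      (Real.hasDerivAt_cosh x).const_mul (m^4)
    have h4 : HasDerivAt (fun y : ℝ => m^4/2*y^2) (m^4/2*(2*x^1)) x :=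
      (hasDerivAt_pow 2 x).const_mul (m^4/2)
    exact (((h1.sub h2).sub h3).add h4).congr_deriv (by ring)
  have key := aux_mono hdf hgpos hu
  simp only [mul_zero, Real.cosh_zero] at key
  norm_num at key
  linarith


private lemma jord {a : ℝ} (h0 : 0 ≤ a) (h1 : a ≤ 1) : a ≤ Real.sin (a * π / 2) := by
  have hπ := Real.pi_pos
  have h := Real.mul_le_sin (x := a * π / 2) (by positivity) (by nlinarith)
  rw [show 2 / π * (a * π / 2) = a by field_simp] at h
  exact h

private lemma scalarA {α : ℝ} (h0 : 0 < α) (h1 : α ≤ 1) :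
    4 * α^2 ≤ Real.sin (α * π / 2) * (1 + α)^2 := by
  have hj := jord h0.le h1
  nlinarith [mul_nonneg h0.le (sq_nonneg (1 - α))]

private lemma zpoly {z p : ℝ} (hπl : 3.1415 < p) (hπu : p < 3.1416)
    (hz0 : 0 ≤ z) (hz1 : z ≤ p / 4) :
    2*(p - 2*z)^2 ≤ (1 - z^2/2)^2 * (p^2 + (p - 2*z)^2) := by
  have hbr : 0 ≤ 4*(p - z) - z*(p^2 + (p - 2*z)^2)*(1 - z^2/4) := by
    nlinarith [sq_nonneg z, sq_nonneg (z - 1), mul_nonneg hz0 hz0,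
      mul_nonneg (mul_nonneg hz0 hz0) hz0, sq_nonneg (p - 2*z), sq_nonneg (p - z),
      mul_nonneg hz0 (sub_nonneg.2 hz1), sq_nonneg (z - 1/2),
      mul_nonneg (mul_nonneg hz0 hz0) (sub_nonneg.2 hz1)]
  nlinarith [mul_nonneg hz0 hbr]

private lemma scalarB {α : ℝ} (h0 : 0 < α) (h1 : α ≤ 1) :
    2 * α^2 ≤ Real.sin (α * π / 2)^2 * (1 + α^2) := by
  have hπl := Real.pi_gt_d4
  have hπu := Real.pi_lt_d4
  have hp2l : (9.869:ℝ) ≤ π^2 := by nlinarith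
  have hp2u : π^2 ≤ 9.87 := by nlinarith
  rcases le_or_gt α (1/2) with hc | hc
  · -- small α : use sin x > x - x^3/4
    obtain ⟨θ, hθ⟩ : ∃ θ, θ = α * π / 2 := ⟨_, rfl⟩
    rw [← hθ]
    have hθsq : θ^2 = α^2*π^2/4 := by rw [hθ]; ring
    have hθ0 : 0 < θ := by rw [hθ]; positivity
    have hθ1 : θ ≤ 1 := by rw [hθ]; nlinarith
    have hα2 : α^2 ≤ 1/4 := by nlinarith
    have hθb : θ^2 ≤ π^2/16 := by
      rw [hθsq]; nlinarith [mul_nonneg (show (0:ℝ) ≤ 1/4 - α^2 by nlinarith) (sq_nonneg π)]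
    have hθb' : θ^2 ≤ 0.617 := by nlinarith
    have hs : θ - θ^3/4 < Real.sin θ := by
      have := Real.sin_gt_sub_cube hθ0; nlinarith [pow_pos hθ0 3]
    have hpos : 0 < θ - θ^3/4 := by nlinarith [mul_pos hθ0 hθ0]
    have hsq : (θ - θ^3/4)^2 ≤ Real.sin θ ^ 2 := by nlinarith
    have h8 : 8 ≤ (1 - θ^2/4)^2 * (π^2 + 4*θ^2) := by
      nlinarith [sq_nonneg (θ^2), mul_nonneg (sq_nonneg θ) (sub_nonneg.2 hθb'),
        mul_nonneg (mul_nonneg (sq_nonneg θ) (sq_nonneg θ)) (sq_nonneg θ)]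
    have e1 : (θ - θ^3/4)^2*(1+α^2) = (1-θ^2/4)^2 * (θ^2 + α^2*θ^2) := by ring
    have e2 : θ^2 + α^2*θ^2 = α^2/4 * (π^2 + 4*θ^2) := by rw [hθsq]; ring
    have hkey : 2 * α^2 ≤ (θ - θ^3/4)^2*(1+α^2) := by
      rw [e1, e2]
      calc 2*α^2 = α^2/4*8 := by ring
        _ ≤ α^2/4*((1 - θ^2/4)^2*(π^2+4*θ^2)) :=
            mul_le_mul_of_nonneg_left h8 (by positivity)
        _ = (1-θ^2/4)^2 * (α^2/4*(π^2+4*θ^2)) := by ring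
    have hmul := mul_le_mul_of_nonneg_right hsq (show (0:ℝ) ≤ 1+α^2 by positivity)
    linarith
  · -- large α : z = (1-α)π/2, sin(απ/2) = cos z ≥ 1 - z²/2
    obtain ⟨z, hz⟩ : ∃ z, z = (1 - α) * π / 2 := ⟨_, rfl⟩
    have hz0 : 0 ≤ z := by rw [hz]; nlinarith
    have hz1 : z ≤ π / 4 := by rw [hz]; nlinarith
    have hsin : Real.sin (α * π / 2) = Real.cos z := by
      rw [hz, show α * π / 2 = π/2 - (1-α)*π/2 by ring, Real.sin_pi_div_two_sub]
    have hcos := Real.one_sub_sq_div_two_le_cos (x := z)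
    have hq : 0 ≤ 1 - z^2/2 := by nlinarith
    have hkey := zpoly hπl hπu hz0 hz1
    have hπ2z : π - 2*z = α * π := by rw [hz]; ring
    rw [hπ2z] at hkey
    have hcos2 : (1 - z^2/2)^2 ≤ Real.cos z ^ 2 := pow_le_pow_left₀ hq hcos 2
    have h3 := mul_le_mul_of_nonneg_right hcos2
        (show (0:ℝ) ≤ π^2 + (α*π)^2 by positivity)
    have h2 : 2*α^2*π^2 ≤ Real.cos z^2 * (1+α^2) * π^2 := by
      calc 2*α^2*π^2 = 2*(α*π)^2 := by ring
        _ ≤ (1 - z^2/2)^2 * (π^2 + (α*π)^2) := hkey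
        _ ≤ Real.cos z^2 * (π^2 + (α*π)^2) := h3
        _ = Real.cos z^2 * (1+α^2) * π^2 := by ring
    rw [hsin]
    have hπ2 : (0:ℝ) < π^2 := by positivity
    exact le_of_mul_le_mul_right h2 hπ2


set_option maxHeartbeats 2000000 in
private lemma core {α : ℝ} (h0 : 0 < α) (h1 : α ≤ 1) (t : ℝ) :
    Real.cosh t ^ 2 - Real.cos (α*π/2)^2 ≤
      Real.sin (α*π/2)^2 * (Real.cosh t * Real.cosh (t/α)) := by
  have habs : ∀ u : ℝ, 0 ≤ u → Real.cosh u ^ 2 - Real.cos (α*π/2)^2 ≤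
      Real.sin (α*π/2)^2 * (Real.cosh u * Real.cosh (u/α)) := by
    intro u hu
    obtain ⟨s, hs⟩ : ∃ s, s = Real.sin (α*π/2) := ⟨_, rfl⟩
    obtain ⟨c, hc⟩ : ∃ c, c = Real.cos (α*π/2) := ⟨_, rfl⟩
    obtain ⟨β, hβ⟩ : ∃ β, β = 1/α := ⟨_, rfl⟩
    have hαβ : α * β = 1 := by rw [hβ]; field_simp
    have hβ1 : 1 ≤ β := by rw [hβ, le_div_iff₀ h0]; linarith
    have hμ : 1 ≤ (β+1)/2 := by linarith
    have hpyth : s^2 + c^2 = 1 := by rw [hs, hc]; exact Real.sin_sq_add_cos_sq _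
    have hsnn : 0 ≤ s := by
      rw [hs]; apply Real.sin_nonneg_of_nonneg_of_le_pi
      · positivity
      · nlinarith [Real.pi_pos]
    have hα2 : (0:ℝ) < α^2 := by positivity
    have hdiv : u/α = β*u := by rw [hβ]; field_simp
    have e1 : Real.cosh (β*u + u) + Real.cosh (β*u - u) =
        2*(Real.cosh (β*u) * Real.cosh u) := by
      rw [Real.cosh_add, Real.cosh_sub]; ring
    have e1' : s^2*(Real.cosh u * Real.cosh (β*u)) =
        (s^2*Real.cosh (β*u + u) + s^2*Real.cosh (β*u - u))/2 := by
      linear_combination (-(s^2)/2) * e1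
    have e2 : Real.cosh (2*u) = 2*Real.cosh u^2 - 1 := by
      have := Real.cosh_two_mul u
      have h3 := Real.cosh_sq_sub_sinh_sq u
      nlinarith
    have hS3 := cosh_quartic_lb hμ (by linarith : (0:ℝ) ≤ 2*u)
    rw [show (β+1)/2*(2*u) = β*u + u by ring] at hS3
    have hS0b := cosh_lb ((β-1)*u)
    rw [show ((β-1)*u) = β*u - u by ring] at hS0b
    have hZ : 0 ≤ Real.cosh (2*u) - 1 - (2*u)^2/2 := by
      have := cosh_lb (2*u); linarith
    -- scalar facts in β form
    have hsA : 1 ≤ s * ((β+1)/2)^2 := by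
      have h := scalarA h0 h1
      rw [← hs] at h
      have h4 : 1*α^2 ≤ (s*((β+1)/2)^2) * α^2 := by
        have e : (s*((β+1)/2)^2)*α^2 = s*(α*β+α)^2/4 := by ring
        rw [e, hαβ]; linarith
      exact le_of_mul_le_mul_right h4 hα2
    have hsB : 2 ≤ s^2 * (β^2+1) := by
      have h := scalarB h0 h1
      rw [← hs] at h
      have h4 : 2*α^2 ≤ (s^2*(β^2+1)) * α^2 := by
        have e : (s^2*(β^2+1))*α^2 = s^2*((α*β)^2+α^2) := by ring
        rw [e, hαβ]; linarith
      exact le_of_mul_le_mul_right h4 hα2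
    have hsA2 : 1 ≤ s^2 * ((β+1)/2)^4 := by nlinarith [hsA, sq_nonneg (s*((β+1)/2)^2 - 1)]
    -- assemble
    rw [← hs, ← hc, hdiv]
    have hA : s^2 * (1 + ((β+1)/2)^2*(2*u)^2/2 + ((β+1)/2)^4*(Real.cosh (2*u) - 1 - (2*u)^2/2))
        ≤ s^2 * Real.cosh (β*u + u) := by
      apply mul_le_mul_of_nonneg_left _ (sq_nonneg s)
      linarith
    have hB : s^2 * (1 + (β*u - u)^2/2) ≤ s^2 * Real.cosh (β*u - u) := by
      apply mul_le_mul_of_nonneg_left _ (sq_nonneg s)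
      linarith
    have hu2 : 2*u^2 ≤ s^2*(((β+1)/2)^2*(2*u)^2/2) + s^2*((β*u - u)^2/2) := by
      have e : s^2*(((β+1)/2)^2*(2*u)^2/2) + s^2*((β*u-u)^2/2) = (s^2*(β^2+1))*u^2 := by ring
      rw [e]
      exact mul_le_mul_of_nonneg_right hsB (sq_nonneg u)
    have hZ2 : Real.cosh (2*u) - 1 - (2*u)^2/2 ≤
        s^2*(((β+1)/2)^4*(Real.cosh (2*u) - 1 - (2*u)^2/2)) := by
      have e : s^2*(((β+1)/2)^4*(Real.cosh (2*u) - 1 - (2*u)^2/2)) =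
          (s^2*((β+1)/2)^4)*(Real.cosh (2*u) - 1 - (2*u)^2/2) := by ring
      rw [e]
      linarith [mul_nonneg (by linarith : (0:ℝ) ≤ s^2*((β+1)/2)^4 - 1) hZ]
    linarith [e1', e2, hA, hB, hu2, hZ2, hpyth]
  have h := habs |t| (abs_nonneg t)
  rcases abs_cases t with ⟨he, _⟩ | ⟨he, _⟩
  · rwa [he] at h
  · rw [he] at h
    rwa [Real.cosh_neg, show -t/α = -(t/α) by ring, Real.cosh_neg] at h


theorem lens_g_min (α : ℝ) (hα : α ∈ Set.Ioc (0:ℝ) 1)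
    (g : ℝ → ℝ)
    (hg : ∀ x, g x = (x * (1 + x^2) * (1 + x ^ ((2:ℝ)/α))) /
      (x ^ ((1:ℝ)/α) * ((1 + x^2)^2 - 4 * x^2 * (Real.cos (α * π / 2))^2))) :
    (∀ x > (0:ℝ), g x ≥ g 1) ∧ g 1 = 1 / (Real.sin (α * π / 2))^2 := by
  obtain ⟨h0, h1⟩ := hα
  have hπ := Real.pi_pos
  have hs : 0 < Real.sin (α * π / 2) :=
    Real.sin_pos_of_pos_of_lt_pi (by positivity) (by nlinarith)
  have hpyth := Real.sin_sq_add_cos_sq (α * π / 2)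
  have hg1 : g 1 = 1 / (Real.sin (α * π / 2))^2 := by
    rw [hg 1, Real.one_rpow, Real.one_rpow]
    rw [show ((1:ℝ) * (1 + 1^2) * (1 + 1)) = 4 by norm_num,
      show ((1:ℝ) * ((1 + 1^2)^2 - 4 * 1^2 * (Real.cos (α * π / 2))^2))
        = 4 * Real.sin (α * π / 2)^2 by nlinarith]
    rw [div_eq_div_iff (by positivity) (by positivity)]
    ring
  refine ⟨?_, hg1⟩
  intro x hx
  rw [hg x, hg1, ge_iff_le]
  obtain ⟨X, hX⟩ : ∃ X, X = x ^ ((1:ℝ)/α) := ⟨_, rfl⟩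
  have hXpos : 0 < X := hX ▸ Real.rpow_pos_of_pos hx _
  have hx2 : x ^ ((2:ℝ)/α) = X^2 := by
    rw [hX, show (2:ℝ)/α = 1/α + 1/α by ring, Real.rpow_add hx]; ring
  have hD : 0 < (1 + x^2)^2 - 4 * x^2 * (Real.cos (α * π / 2))^2 := by
    nlinarith [sq_nonneg (1 - x^2), mul_pos (mul_pos hx hx) (mul_pos hs hs)]
  -- translate core at t = log x
  have hcore := core h0 h1 (Real.log x)
  have e1 : Real.cosh (Real.log x) = (x + x⁻¹)/2 := by
    rw [Real.cosh_eq, Real.exp_log hx, Real.exp_neg, Real.exp_log hx]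
  have e2 : Real.cosh (Real.log x / α) = (X + X⁻¹)/2 := by
    rw [Real.cosh_eq, hX, Real.rpow_def_of_pos hx,
      show Real.log x * (1/α) = Real.log x / α by ring, ← Real.exp_neg]
  rw [e1, e2] at hcore
  -- clear denominators in hcore
  have hxne : x ≠ 0 := ne_of_gt hx
  have hXne : X ≠ 0 := ne_of_gt hXpos
  have hkey : X * ((1 + x^2)^2 - 4 * x^2 * (Real.cos (α * π / 2))^2) ≤
      x * (1 + x^2) * (1 + x ^ ((2:ℝ)/α)) * Real.sin (α * π / 2)^2 := by
    rw [hx2]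
    have h4 := mul_le_mul_of_nonneg_left hcore
      (show (0:ℝ) ≤ 4 * x^2 * X by positivity)
    have eL : 4 * x^2 * X * (((x + x⁻¹)/2)^2 - Real.cos (α * π / 2)^2)
        = X * ((1 + x^2)^2 - 4 * x^2 * (Real.cos (α * π / 2))^2) := by
      field_simp; ring
    have eR : 4 * x^2 * X * (Real.sin (α * π / 2)^2 * (((x + x⁻¹)/2) * ((X + X⁻¹)/2)))
        = x * (1 + x^2) * (1 + X^2) * Real.sin (α * π / 2)^2 := by
      field_simp; ring
    rw [eL, eR] at h4
    exact h4
  rw [div_le_div_iff₀ (by positivity) (by positivity), one_mul, ← hX]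
  exact hkey
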